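/- Let β₀ be a positive real with |log(z/(2−z))| ≥ 1 whenever |z| ≥ β₀ (for z with z ≠ 0, z ≠ 2 and appropriate branch); assume this characterization. Let α > 0, 0 ≤ β ≤ 4α and γ ≥ β₀ e + α + β²/(8α). Let θ ∈ (0,2π) with cos 2θ ≥ 0, m ≥ 1, r = exp(e^{iθ}), s = m e^{iθ} r, t, u ∈ ℂ with Re(1 + t/s) ≥ m(1 + cos θ) and Re(u/s) ≥ m cos 2θ. Then |α u + β t + γ s| ≥ β₀. -/

import Mathlib

open Real Complex

theorem stmt_16 (β₀ α β γ θ m : ℝ)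
    (hβ₀ : 0 < β₀)
    (hlog : ∀ z : ℂ, z ≠ 0 → z ≠ 2 → ¬((z / (2 - z)).im = 0 ∧ (z / (2 - z)).re ≤ 0) →
      β₀ ≤ ‖z‖ → 1 ≤ ‖Complex.log (z / (2 - z))‖)
    (hα : 0 < α) (hβ : 0 ≤ β) (hβα : β ≤ 4 * α)
    (hγ : β₀ * Real.exp 1 + α + β ^ 2 / (8 * α) ≤ γ)
    (hθ : θ ∈ Set.Ioo 0 (2 * Real.pi)) (hcos : 0 ≤ Real.cos (2 * θ)) (hm : 1 ≤ m)
    (r s t u : ℂ)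
    (hr : r = Complex.exp (Complex.exp (θ * Complex.I)))
    (hs : s = (m : ℂ) * Complex.exp (θ * Complex.I) * r)
    (hs0 : s ≠ 0)
    (ht : m * (1 + Real.cos θ) ≤ (1 + t / s).re)
    (hu : m * Real.cos (2 * θ) ≤ (u / s).re) :
    β₀ ≤ ‖(α : ℂ) * u + (β : ℂ) * t + (γ : ℂ) * s‖ := by
  have hm0 : (0:ℝ) < m := lt_of_lt_of_le one_pos hm
  set c := Real.cos θ with hc
  have hc1 : -1 ≤ c := Real.neg_one_le_cos θ
  have hc2 : c ≤ 1 := Real.cos_le_one θ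
  have habs : ‖s‖ = m * Real.exp c := by
    rw [hs, hr, norm_mul, norm_mul, Complex.norm_exp, Complex.norm_exp,
      Complex.exp_ofReal_mul_I_re]
    simp [abs_of_pos hm0, hc]
  set w : ℂ := (α : ℂ) * u + (β : ℂ) * t + (γ : ℂ) * s with hw
  have hdiv : w / s = (α:ℂ) * (u/s) + (β:ℂ) * (t/s) + (γ:ℂ) := by
    field_simp [hw]
    rw [hw]; ring
  have hX : β₀ * Real.exp 1 ≤ (w / s).re := by
    rw [hdiv]
    simp only [Complex.add_re, Complex.re_ofReal_mul, Complex.ofReal_re]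
    have h1 : m*(1+c) - 1 ≤ (t/s).re := by
      simp only [Complex.add_re, Complex.one_re] at ht; linarith
    have hcos2 : Real.cos (2*θ) = 2*c^2 - 1 := by
      rw [Real.cos_two_mul]
    have hu' : m * (2*c^2-1) ≤ (u/s).re := by rw [hcos2] at hu; exact hu
    have h8 : β^2 = (β^2/(8*α))*(8*α) := by field_simp
    have hA : α * (m * (2*c^2-1)) ≤ α * (u/s).re := mul_le_mul_of_nonneg_left hu' hα.le
    have hB : β * (m*(1+c) - 1) ≤ β * (t/s).re := mul_le_mul_of_nonneg_left h1 hβ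
    have hC : 0 ≤ (m-1) * α * (2*c^2-1) :=
      mul_nonneg (mul_nonneg (by linarith) hα.le) (by linarith)
    have hD : 0 ≤ β * ((m-1) * (1+c)) :=
      mul_nonneg hβ (mul_nonneg (by linarith) (by linarith))
    nlinarith [sq_nonneg (4*α*c + β), hα]
  have hre_le : (w/s).re ≤ ‖w/s‖ := Complex.re_le_norm _
  have habsdiv : ‖w/s‖ = ‖w‖ / ‖s‖ := norm_div _ _
  have hs_lb : Real.exp (-1) ≤ ‖s‖ := by
    rw [habs]
    calc Real.exp (-1) = 1 * Real.exp (-1) := by ring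
    _ ≤ m * Real.exp c := by
      exact mul_le_mul hm (Real.exp_le_exp.2 (by linarith)) (Real.exp_pos _).le hm0.le
  have hwpos : β₀ * Real.exp 1 ≤ ‖w‖ / ‖s‖ := by
    rw [← habsdiv]; exact hX.trans hre_le
  have hsabs0 : (0:ℝ) < ‖s‖ := lt_of_lt_of_le (Real.exp_pos _) hs_lb
  have h2 : β₀ * Real.exp 1 * ‖s‖ ≤ ‖w‖ := by
    rw [← le_div_iff₀ hsabs0]; exact hwpos
  calc β₀ = β₀ * Real.exp 1 * Real.exp (-1) := by
        rw [mul_assoc, ← Real.exp_add]; simp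
    _ ≤ β₀ * Real.exp 1 * ‖s‖ := by
        exact mul_le_mul_of_nonneg_left hs_lb (by positivity)
    _ ≤ ‖w‖ := h2
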